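/- Let n ≥ 1, let A = diag(λ₁,…,λₙ) be a real diagonal n×n matrix, and let H be a real symmetric n×n matrix. Then 2·Tr(H(I + A²)^{−1}H) − 2·Tr(A(I + A²)^{−1}(AH + HA)(I + A²)^{−1}H) = ∑_{p=1}^n ∑_{q=1}^n (2 − 2λ_p λ_q)/((1 + λ_p²)(1 + λ_q²)) · H_{pq}². -/
import Mathlib

/-- Let `A = diag (λ₁, …, λₙ)` be a real diagonal `n×n` matrix and `H` a
real symmetric `n×n` matrix. Then
`2 Tr (H (I + A²)⁻¹ H) - 2 Tr (A (I + A²)⁻¹ (AH + HA) (I + A²)⁻¹ H)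
  = ∑ p, ∑ q, (2 - 2 λ_p λ_q) / ((1 + λ_p²)(1 + λ_q²)) · H_{pq}²`. -/
theorem stmt_14 (n : ℕ) (hn : 1 ≤ n) (lam : Fin n → ℝ)
    (H : Matrix (Fin n) (Fin n) ℝ) (hH : H.IsSymm) :
    2 * Matrix.trace (H * (1 + (Matrix.diagonal lam) ^ 2)⁻¹ * H)
      - 2 * Matrix.trace ((Matrix.diagonal lam) * (1 + (Matrix.diagonal lam) ^ 2)⁻¹ *
          ((Matrix.diagonal lam) * H + H * (Matrix.diagonal lam)) *
          (1 + (Matrix.diagonal lam) ^ 2)⁻¹ * H)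
      = ∑ p, ∑ q,
          (2 - 2 * lam p * lam q) / ((1 + (lam p) ^ 2) * (1 + (lam q) ^ 2)) * (H p q) ^ 2 := by
  have hpos : ∀ p, (1 + lam p ^ 2) ≠ 0 := fun p => by positivity
  have h1 : (1 : Matrix (Fin n) (Fin n) ℝ) + (Matrix.diagonal lam) ^ 2
      = Matrix.diagonal (fun p => 1 + lam p ^ 2) := by
    rw [sq, Matrix.diagonal_mul_diagonal, ← Matrix.diagonal_one, Matrix.diagonal_add]
    congr 1
    funext p
    ring
  have key : (1 + (Matrix.diagonal lam) ^ 2)⁻¹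
      = Matrix.diagonal (fun p => (1 + lam p ^ 2)⁻¹) := by
    rw [h1]
    apply Matrix.inv_eq_right_inv
    rw [Matrix.diagonal_mul_diagonal,
      show (fun i => (1 + lam i ^ 2) * (1 + lam i ^ 2)⁻¹) = fun _ : Fin n => (1:ℝ) from
        funext fun p => mul_inv_cancel₀ (hpos p), Matrix.diagonal_one]
  rw [key]
  simp only [Matrix.trace, Matrix.diag_apply, Matrix.mul_apply, Matrix.diagonal_apply,
    Matrix.add_apply, ite_mul, mul_ite, zero_mul, mul_zero, Finset.sum_ite_eq,
    Finset.sum_ite_eq', Finset.mem_univ, if_true, Finset.mul_sum, Finset.sum_mul]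
  rw [← Finset.sum_sub_distrib]
  refine Finset.sum_congr rfl fun p _ => ?_
  rw [← Finset.sum_sub_distrib]
  refine Finset.sum_congr rfl fun q _ => ?_
  have hqp : H q p = H p q := by rw [← hH.apply]
  rw [hqp]
  field_simp
  ring
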